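/- Let S and T be dependent 3-cutsets of G. Then |S ∩ T| ≤ 1, and moreover each of the graphs G − S and G − T has at most 3 connected components. -/

import Mathlib

namespace Paper

variable {V : Type*}

/-- `S ⊆ V(G)` is a cutset of `G`: the graph `G − S` is disconnected. -/
def IsCutset (G : SimpleGraph V) (S : Set V) : Prop :=
  ¬ (G.induce (Sᶜ : Set V)).Connected

/-- A 3-cutset: a cutset of exactly 3 vertices. -/
def IsThreeCutset (G : SimpleGraph V) (S : Set V) : Prop :=
  S.ncard = 3 ∧ IsCutset G S

/-- `G` is triconnected: at least 4 vertices and deleting any at most 2 vertices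
leaves a connected graph. -/
def IsTriconnected [Fintype V] (G : SimpleGraph V) : Prop :=
  4 ≤ Fintype.card V ∧
    ∀ X : Set V, X.ncard ≤ 2 → (G.induce (Xᶜ : Set V)).Connected

/-- `x` and `y` both survive the deletion of `R` and lie in the same connected
component of `G − R`. -/
def ReachOutside (G : SimpleGraph V) (R : Set V) (x y : V) : Prop :=
  ∃ (hx : x ∈ (Rᶜ : Set V)) (hy : y ∈ (Rᶜ : Set V)),
    (G.induce (Rᶜ : Set V)).Reachable ⟨x, hx⟩ ⟨y, hy⟩

/-- `R` splits `X`: two vertices of `X \ R` lie in different connected components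
of `G − R`. -/
def Splits (G : SimpleGraph V) (R X : Set V) : Prop :=
  ∃ x ∈ X, ∃ y ∈ X, x ∉ R ∧ y ∉ R ∧ ¬ ReachOutside G R x y

/-- Two 3-cutsets are dependent iff one splits the other. -/
def Dependent (G : SimpleGraph V) (S T : Set V) : Prop :=
  Splits G S T ∨ Splits G T S

/-- The connected component of `G − R` containing `u` (empty if `u ∈ R`). -/
def compOutside (G : SimpleGraph V) (R : Set V) (u : V) : Set V :=
  {y | ReachOutside G R u y}

/-- `C` is a connected component of `G − R`. -/
def IsCompOutside (G : SimpleGraph V) (R : Set V) (C : Set V) : Prop :=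
  ∃ u, u ∉ R ∧ C = compOutside G R u

lemma reachOutside_refl {G : SimpleGraph V} {R : Set V} {x : V} (hx : x ∉ R) :
    ReachOutside G R x x := ⟨hx, hx, .refl _⟩

lemma ReachOutside.symm {G : SimpleGraph V} {R : Set V} {x y : V}
    (h : ReachOutside G R x y) : ReachOutside G R y x := by
  obtain ⟨hx, hy, hr⟩ := h; exact ⟨hy, hx, hr.symm⟩

lemma ReachOutside.trans {G : SimpleGraph V} {R : Set V} {x y z : V}
    (h : ReachOutside G R x y) (h' : ReachOutside G R y z) : ReachOutside G R x z := by
  obtain ⟨hx, hy, hr⟩ := h; obtain ⟨hy', hz, hr'⟩ := h'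
  exact ⟨hx, hz, hr.trans hr'⟩

lemma reachOutside_of_adj {G : SimpleGraph V} {R : Set V} {x y : V}
    (h : G.Adj x y) (hx : x ∉ R) (hy : y ∉ R) : ReachOutside G R x y :=
  ⟨hx, hy, SimpleGraph.Adj.reachable (by simpa using h)⟩

/-- Walking in `G − (S \ {s})`: either we stay away from `s` (so reach in `G−S`),
or we find a vertex adjacent to `s` reachable from the start in `G−S`. -/
lemma walk_rescue {G : SimpleGraph V} {S : Set V} {s : V}
    {a b : ↥(((S \ {s} : Set V))ᶜ : Set V)}
    (W : (G.induce (((S \ {s} : Set V))ᶜ : Set V)).Walk a b)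
    (ha : (a : V) ∉ S) :
    ReachOutside G S (a : V) (b : V) ∨
      ∃ c, ReachOutside G S (a : V) c ∧ G.Adj s c := by
  induction W with
  | nil => exact Or.inl (reachOutside_refl ha)
  | @cons u v w h p ih =>
    have hadj : G.Adj (u : V) (v : V) := by simpa using h
    by_cases hvs : (v : V) = s
    · refine Or.inr ⟨u, reachOutside_refl ha, ?_⟩
      have := hadj.symm
      rw [hvs] at this
      exact this
    · have hv : (v : V) ∉ S := by
        intro hvS
        exact v.property ⟨hvS, hvs⟩
      have h1 : ReachOutside G S (u : V) (v : V) := reachOutside_of_adj hadj ha hv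
      rcases ih hv with h2 | ⟨c, hc, hcs⟩
      · exact Or.inl (h1.trans h2)
      · exact Or.inr ⟨c, h1.trans hc, hcs⟩

/-- Transfer reachability along a walk in `G−S` whose component avoids `T`. -/
lemma walk_transfer {G : SimpleGraph V} {S T : Set V} {u : V}
    (hT : ∀ v, ReachOutside G S u v → v ∉ T)
    {a b : ↥((Sᶜ : Set V))}
    (W : (G.induce (Sᶜ : Set V)).Walk a b)
    (hua : ReachOutside G S u (a : V)) :
    ReachOutside G T (a : V) (b : V) := by
  induction W with
  | nil => exact reachOutside_refl (hT _ hua)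
  | @cons x y z h p ih =>
    have hadj : G.Adj (x : V) (y : V) := by simpa using h
    have hxy : ReachOutside G S (x : V) (y : V) :=
      reachOutside_of_adj hadj x.property y.property
    have huy : ReachOutside G S u (y : V) := hua.trans hxy
    exact (reachOutside_of_adj hadj (hT _ hua) (hT _ huy)).trans (ih huy)

lemma ReachOutside.transfer {G : SimpleGraph V} {S T : Set V} {u b : V}
    (h : ReachOutside G S u b) (hT : ∀ v, ReachOutside G S u v → v ∉ T) :
    ReachOutside G T u b := by
  obtain ⟨hu, hb, hr⟩ := h
  obtain ⟨W⟩ := hr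
  exact walk_transfer hT W (reachOutside_refl hu)


/-- Every vertex of a 3-set `S` has a neighbour in every component of `G − S`,
provided `G − S` is disconnected (witnessed by `w`). -/
lemma exists_adj_in_comp [Fintype V] {G : SimpleGraph V} (htri : IsTriconnected G)
    {S : Set V} (hS3 : S.ncard = 3) {u w s : V} (hu : u ∉ S) (hw : w ∉ S) (hs : s ∈ S)
    (hnr : ¬ ReachOutside G S u w) :
    ∃ c, ReachOutside G S u c ∧ G.Adj s c := by
  have hX2 : (S \ {s} : Set V).ncard ≤ 2 := by
    have := Set.ncard_diff_singleton_of_mem hs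
    omega
  have hconn := htri.2 _ hX2
  have hu' : u ∈ ((S \ {s} : Set V))ᶜ := fun h => hu h.1
  have hw' : w ∈ ((S \ {s} : Set V))ᶜ := fun h => hw h.1
  obtain ⟨W⟩ := hconn.preconnected ⟨u, hu'⟩ ⟨w, hw'⟩
  rcases walk_rescue W hu with h | ⟨c, hc, hadj⟩
  · exact absurd h hnr
  · exact ⟨c, hc, hadj⟩

/-- If `u`'s component in `G − S` avoids `T` entirely (and `G−S` is disconnected),
then all of `S \ T` lies in one component of `G − T`, so `T` does not split `S`. -/
lemma not_splits_of_comp_avoiding [Fintype V] {G : SimpleGraph V} (htri : IsTriconnected G)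
    {S T : Set V} (hS3 : S.ncard = 3)
    {u w : V} (hu : u ∉ S) (hw : w ∉ S) (hnr : ¬ ReachOutside G S u w)
    (hT : ∀ v, ReachOutside G S u v → v ∉ T) :
    ¬ Splits G T S := by
  rintro ⟨x, hxS, y, hyS, hxT, hyT, hxy⟩
  have key : ∀ z ∈ S, z ∉ T → ReachOutside G T z u := by
    intro z hz hzT
    obtain ⟨c, hc, hadj⟩ := exists_adj_in_comp htri hS3 hu hw hz hnr
    have hcT : c ∉ T := hT c hc
    have h1 : ReachOutside G T u c := (hc.transfer hT)
    have huT : u ∉ T := hT u (reachOutside_refl hu)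
    exact (reachOutside_of_adj hadj hzT hcT).trans h1.symm
  exact hxy ((key x hxS hxT).trans (key y hyS hyT).symm)


lemma ncard_inter_le_one_of_splits {G : SimpleGraph V} {S T : Set V}
    (hTfin : T.Finite) (hT3 : T.ncard = 3) (h : Splits G S T) : (S ∩ T).ncard ≤ 1 := by
  obtain ⟨x, hxT, y, hyT, hxS, hyS, hxy⟩ := h
  have hne : x ≠ y := by rintro rfl; exact hxy (reachOutside_refl hxS)
  have hsub : ({x, y} : Set V) ⊆ T \ S := by
    rintro z (rfl | rfl)
    exacts [⟨hxT, hxS⟩, ⟨hyT, hyS⟩]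
  have h2 : 2 ≤ (T \ S).ncard := by
    calc 2 = ({x, y} : Set V).ncard := (Set.ncard_pair hne).symm
      _ ≤ _ := Set.ncard_le_ncard hsub (hTfin.diff)
  have h3 : (T ∩ S).ncard + (T \ S).ncard = T.ncard :=
    Set.ncard_inter_add_ncard_diff_eq_ncard T S hTfin
  rw [Set.inter_comm]
  omega

/-- Symmetry of dependence. -/
lemma splits_symm [Fintype V] {G : SimpleGraph V} (htri : IsTriconnected G)
    {S T : Set V} (hS : IsThreeCutset G S) (hT : IsThreeCutset G T)
    (hST : Splits G S T) : Splits G T S := by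
  by_contra hns
  have hns' : ∀ x ∈ S, ∀ y ∈ S, x ∉ T → y ∉ T → ReachOutside G T x y := by
    intro x hx y hy hxT hyT
    by_contra hc
    exact hns ⟨x, hx, y, hy, hxT, hyT, hc⟩
  obtain ⟨t1, ht1T, t2, ht2T, ht1S, ht2S, hnr12⟩ := hST
  -- find s0 ∈ S \ T
  have hint : (S ∩ T).ncard ≤ 1 :=
    ncard_inter_le_one_of_splits (Set.toFinite T) hT.1 ⟨t1, ht1T, t2, ht2T, ht1S, ht2S, hnr12⟩
  obtain ⟨s0, hs0S, hs0T⟩ : ∃ s0 ∈ S, s0 ∉ T := by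
    by_contra hh
    push_neg at hh
    have : S ∩ T = S := Set.inter_eq_left.mpr hh
    rw [this] at hint
    have := hS.1
    omega
  -- G − T is disconnected: get a vertex not reachable from s0
  obtain ⟨u, huT, hu_nr⟩ : ∃ u, u ∉ T ∧ ¬ ReachOutside G T s0 u := by
    by_contra hh
    push_neg at hh
    apply hT.2
    have hne : Nonempty ↥(Tᶜ : Set V) := by
      rw [Set.nonempty_coe_sort, Set.nonempty_compl]
      intro hTuniv
      have := hT.1
      rw [hTuniv, Set.ncard_univ, Nat.card_eq_fintype_card] at this
      have := htri.1
      omega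
    refine SimpleGraph.Connected.mk ?_
    intro a b
    obtain ⟨_, _, ra⟩ := hh a a.2
    obtain ⟨_, _, rb⟩ := hh b b.2
    exact ra.symm.trans rb
  -- u's component in G−T avoids S
  have hcomp : ∀ v, ReachOutside G T u v → v ∉ S := by
    intro v hv hvS
    have hvT : v ∉ T := hv.2.1
    have : ReachOutside G T s0 v := hns' s0 hs0S v hvS hs0T hvT
    exact hu_nr (this.trans hv.symm)
  have huS : u ∉ S := hcomp u (reachOutside_refl huT)
  have hnr_us0 : ¬ ReachOutside G T u s0 := fun h => hu_nr h.symm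
  -- both t1, t2 have neighbours in u's T-component
  have key : ∀ t ∈ T, t ∉ S → ReachOutside G S t u := by
    intro t htT htS
    obtain ⟨c, hc, hadj⟩ := exists_adj_in_comp htri hT.1 huT hs0T htT hnr_us0
    have hcS : c ∉ S := hcomp c hc
    have h1 : ReachOutside G S u c := hc.transfer hcomp
    exact (reachOutside_of_adj hadj htS hcS).trans h1.symm
  exact hnr12 ((key t1 ht1T ht1S).trans (key t2 ht2T ht2S).symm)


lemma card_comp_le [Fintype V] {G : SimpleGraph V} (htri : IsTriconnected G)
    {S T : Set V} (hS3 : S.ncard = 3) (hT3 : T.ncard = 3)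
    (hsp : Splits G T S) :
    Nat.card (G.induce (Sᶜ : Set V)).ConnectedComponent ≤ 3 := by
  by_contra hcard
  push_neg at hcard
  set H := G.induce (Sᶜ : Set V) with hH
  have hNat : Nat.card H.ConnectedComponent = (Set.univ : Set H.ConnectedComponent).ncard :=
    (Set.ncard_univ _).symm
  set B : Set H.ConnectedComponent :=
    (fun x : ↥(Sᶜ : Set V) => H.connectedComponentMk x) '' {x | (x : V) ∈ T} with hB
  have hBcard : B.ncard ≤ 3 := by
    have h1 : B.ncard ≤ {x : ↥(Sᶜ : Set V) | (x : V) ∈ T}.ncard :=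
      Set.ncard_image_le (Set.toFinite _)
    have h2 : {x : ↥(Sᶜ : Set V) | (x : V) ∈ T}.ncard ≤ T.ncard := by
      exact Set.ncard_le_ncard_of_injOn (fun x => (x : V)) (fun a ha => ha)
        (fun a _ b _ h => Subtype.ext h) (Set.toFinite T)
    omega
  obtain ⟨K, hK⟩ : ∃ K : H.ConnectedComponent, K ∉ B := by
    by_contra hh
    push_neg at hh
    have hsub : (Set.univ : Set H.ConnectedComponent) ⊆ B := fun K _ => hh K
    have := Set.ncard_le_ncard hsub (Set.toFinite B)
    omega
  obtain ⟨u, hu⟩ := K.exists_rep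
  have hcompT : ∀ v, ReachOutside G S (u : V) v → v ∉ T := by
    intro v hv hvT
    obtain ⟨hx, hy, hr⟩ := hv
    have hx' : (⟨(u : V), hx⟩ : ↥(Sᶜ : Set V)) = u := Subtype.ext rfl
    rw [hx'] at hr
    apply hK
    refine ⟨⟨v, hy⟩, hvT, ?_⟩
    rw [← hu]
    exact (SimpleGraph.ConnectedComponent.sound hr).symm
  obtain ⟨K', hK'⟩ : ∃ K' : H.ConnectedComponent, K' ≠ K := by
    by_contra hh
    push_neg at hh
    have hsub : (Set.univ : Set H.ConnectedComponent) ⊆ {K} := fun K'' _ => hh K''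
    have := Set.ncard_le_ncard hsub (Set.toFinite _)
    rw [Set.ncard_singleton] at this
    omega
  obtain ⟨w, hw⟩ := K'.exists_rep
  have hnr : ¬ ReachOutside G S (u : V) (w : V) := by
    intro hv
    obtain ⟨hx, hy, hr⟩ := hv
    have hx' : (⟨(u : V), hx⟩ : ↥(Sᶜ : Set V)) = u := Subtype.ext rfl
    have hy' : (⟨(w : V), hy⟩ : ↥(Sᶜ : Set V)) = w := Subtype.ext rfl
    rw [hx', hy'] at hr
    exact hK' (hw ▸ hu ▸ (SimpleGraph.ConnectedComponent.sound hr).symm)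
  exact not_splits_of_comp_avoiding htri hS3 u.2 w.2 hnr hcompT hsp


/-- Corollary 1: dependent 3-cutsets intersect in at most one vertex and each
splits the graph into at most 3 connected components. -/
theorem stmt_0 [Fintype V] (G : SimpleGraph V)
    (htri : IsTriconnected G) (hbig : 6 < Fintype.card V)
    (S T : Set V) (hS : IsThreeCutset G S) (hT : IsThreeCutset G T)
    (hdep : Dependent G S T) :
    (S ∩ T).ncard ≤ 1 ∧
      Nat.card (G.induce (Sᶜ : Set V)).ConnectedComponent ≤ 3 ∧
      Nat.card (G.induce (Tᶜ : Set V)).ConnectedComponent ≤ 3 := by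
  have hST : Splits G S T ∧ Splits G T S := by
    rcases hdep with h | h
    · exact ⟨h, splits_symm htri hS hT h⟩
    · exact ⟨splits_symm htri hT hS h, h⟩
  refine ⟨ncard_inter_le_one_of_splits (Set.toFinite T) hT.1 hST.1, ?_, ?_⟩
  · exact card_comp_le htri hS.1 hT.1 hST.2
  · have h := card_comp_le htri hT.1 hS.1 hST.1
    exact h

end Paper
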